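/- Let E be an n×n integer matrix, D = diag(d₁,…,dₙ) a positive diagonal matrix, and set B = D^{-1}(Eᵀ − E) (assumed integral) and Λ₁ = [[0,−D],[D,−DB]]. Let Ẽ be the 2n×n matrix (D^{-1}E; −Iₙ), assumed to have integer entries. Then for all α, β ∈ ℤⁿ one has (Ẽα)ᵀ Λ₁ (Ẽβ) = 0; that is, the bilinear form given by Λ₁ vanishes identically on the column span of Ẽ. -/

import Mathlib

open Matrix

/-- With `B = D⁻¹(Eᵀ − E)`, `Λ₁ = [[0,−D],[D,−DB]]` and `Ẽ = (D⁻¹E; −Iₙ)`,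
the bilinear form given by `Λ₁` vanishes identically on the column span of
`Ẽ`:  `(Ẽα)ᵀ Λ₁ (Ẽβ) = 0` for all `α, β`. -/
theorem lambda_one_vanishes_on_Etilde (n : ℕ) (E : Matrix (Fin n) (Fin n) ℚ)
    (d : Fin n → ℚ) (hd : ∀ i, 0 < d i) (α β : Fin n → ℚ) :
    let D := Matrix.diagonal d
    let B := D⁻¹ * (Eᵀ - E)
    let Λ₁ := Matrix.fromBlocks (0 : Matrix (Fin n) (Fin n) ℚ) (-D) D (-(D * B))
    let Etil := Matrix.fromRows (D⁻¹ * E) (-(1 : Matrix (Fin n) (Fin n) ℚ))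
    (Etil *ᵥ α) ⬝ᵥ (Λ₁ *ᵥ (Etil *ᵥ β)) = 0 := by
  intro D B Λ₁ Etil
  have hDinv : IsUnit D.det := by
    simp only [D, det_diagonal]
    exact isUnit_iff_ne_zero.mpr (Finset.prod_ne_zero_iff.mpr fun i _ => (hd i).ne')
  have hDD : D * D⁻¹ = 1 := mul_nonsing_inv D hDinv
  have hDD' : D⁻¹ * D = 1 := nonsing_inv_mul D hDinv
  have hDT : Dᵀ = D := diagonal_transpose d
  have hDinvT : D⁻¹ᵀ = D⁻¹ := by rw [transpose_nonsing_inv, hDT]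
  have hDB : D * B = Eᵀ - E := by
    rw [show B = D⁻¹ * (Eᵀ - E) from rfl, ← mul_assoc, hDD, one_mul]
  have h1 : Λ₁ * Etil = fromRows D Eᵀ := by
    rw [show Λ₁ = Matrix.fromBlocks 0 (-D) D (-(D * B)) from rfl,
      show Etil = fromRows (D⁻¹ * E) (-(1 : Matrix (Fin n) (Fin n) ℚ)) from rfl,
      fromBlocks_mul_fromRows]
    simp only [zero_mul, neg_mul_neg, mul_one, zero_add, ← mul_assoc, hDD, one_mul, hDB]
    rw [show E + (Eᵀ - E) = Eᵀ by abel]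
  have h2 : Etilᵀ * (Λ₁ * Etil) = 0 := by
    rw [h1, show Etilᵀ = fromCols (D⁻¹ * E)ᵀ (-(1 : Matrix (Fin n) (Fin n) ℚ))ᵀ from
      transpose_fromRows _ _, fromCols_mul_fromRows, transpose_mul, mul_assoc, hDinvT, hDD',
      mul_one]
    simp
  rw [mulVec_mulVec, dotProduct_mulVec,
    show Etil *ᵥ α = α ᵥ* Etilᵀ from (vecMul_transpose Etil α).symm,
    vecMul_vecMul, h2, vecMul_zero, zero_dotProduct]
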